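/- Let N, R ≥ 1, let A be an R×R complex Hermitian matrix, let B and X be N×R complex matrices, and fix indices i ∈ Fin N, j ∈ Fin R. Define h(X) = Re(trace(Xᴴ·X·A)) − 2·Re(trace(Xᴴ·B)), and set q = B i j − ∑_{l ≠ j} X i l · A l j (equivalently, q = X i j · A j j − (X·A) i j + B i j). Then for every ζ ∈ ℂ, replacing the (i,j) entry of X by ζ yields h = Re(A j j)·|ζ|² − 2·Re(conj(q)·ζ) + h₀, where h₀ is the value of h when the (i,j) entry of X is replaced by 0. -/

import Mathlib

open Matrix

lemma tr_std_mul {m n : Type*} [Fintype m] [Fintype n] [DecidableEq m] [DecidableEq n]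
    (a : m) (b : n) (M : Matrix n m ℂ) :
    Matrix.trace (Matrix.single a b (1 : ℂ) * M) = M b a := by
  rw [Matrix.trace]
  rw [Finset.sum_eq_single a]
  · simp [Matrix.diag, Matrix.mul_apply, Matrix.single]
  · intro k _ hk
    simp [Matrix.diag, Matrix.mul_apply, Matrix.single, Ne.symm hk]
  · simp

lemma std_conjT {m n : Type*} [DecidableEq m] [DecidableEq n] (a : m) (b : n) :
    (Matrix.single a b (1 : ℂ))ᴴ = Matrix.single b a (1 : ℂ) := by
  ext x y
  simp only [Matrix.conjTranspose_apply, Matrix.single, Matrix.of_apply]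
  split_ifs with h1 h2 h3 <;> simp_all <;> tauto

/-- Element-wise quadratic expansion of the analog beamformer objective
`h(X) = Re tr(XᴴXA) − 2 Re tr(XᴴB)` in the `(i,j)` entry of `X`, with
coefficient `q = B i j − ∑_{l ≠ j} X i l · A l j` (equation (40) of the paper). -/
theorem stmt_9 (N R : ℕ) (hN : 1 ≤ N) (hR : 1 ≤ R)
    (A : Matrix (Fin R) (Fin R) ℂ) (hA : A.IsHermitian)
    (B X : Matrix (Fin N) (Fin R) ℂ) (i : Fin N) (j : Fin R)
    (h : Matrix (Fin N) (Fin R) ℂ → ℝ)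
    (hh : ∀ Y, h Y = (Matrix.trace (Yᴴ * Y * A)).re
        - 2 * (Matrix.trace (Yᴴ * B)).re)
    (q : ℂ) (hq : q = B i j - ∑ l ∈ Finset.univ.erase j, X i l * A l j) :
    ∀ ζ : ℂ, h (X.updateRow i (Function.update (X i) j ζ))
      = (A j j).re * ‖ζ‖ ^ 2 - 2 * ((starRingEnd ℂ) q * ζ).re
        + h (X.updateRow i (Function.update (X i) j 0)) := by
  intro ζ
  set E : Matrix (Fin N) (Fin R) ℂ := Matrix.single i j 1 with hE
  set Y0 : Matrix (Fin N) (Fin R) ℂ := X.updateRow i (Function.update (X i) j 0) with hY0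
  set S : ℂ := ∑ l ∈ Finset.univ.erase j, X i l * A l j with hS
  have hY : X.updateRow i (Function.update (X i) j ζ) = Y0 + ζ • E := by
    ext n l
    by_cases hn : n = i <;> by_cases hl : l = j <;>
      simp [hY0, hE, Matrix.updateRow_apply, Function.update_apply, hn, hl,
        Matrix.single, Ne.symm]
  -- entries of Y0 on row i
  have hY0i : ∀ l, Y0 i l = if l = j then 0 else X i l := by
    intro l
    simp [hY0, Matrix.updateRow_apply, Function.update_apply]
  -- (Y0 * A) i j = S
  have h1 : (Y0 * A) i j = S := by
    rw [Matrix.mul_apply, hS]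
    rw [← Finset.sum_erase (f := fun k => Y0 i k * A k j) Finset.univ (show Y0 i j * A j j = 0 by rw [hY0i j]; simp)]
    exact Finset.sum_congr rfl fun l hl => by
      rw [hY0i l, if_neg (Finset.ne_of_mem_erase hl)]
  -- (A * Y0ᴴ) j i = conj S
  have h2 : (A * Y0ᴴ) j i = (starRingEnd ℂ) S := by
    have hAY : A * Y0ᴴ = (Y0 * A)ᴴ := by rw [Matrix.conjTranspose_mul, hA.eq]
    rw [hAY, Matrix.conjTranspose_apply, h1]
    rfl
  -- trace identities
  have tEY0A : Matrix.trace (Eᴴ * Y0 * A) = S := by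
    rw [hE, std_conjT, Matrix.mul_assoc, tr_std_mul, h1]
  have tY0EA : Matrix.trace (Y0ᴴ * E * A) = (starRingEnd ℂ) S := by
    rw [Matrix.mul_assoc, Matrix.trace_mul_comm, hE, Matrix.mul_assoc, tr_std_mul, h2]
  have tEEA : Matrix.trace (Eᴴ * E * A) = A j j := by
    rw [hE, std_conjT]
    have : Matrix.single j i (1:ℂ) * Matrix.single i j (1:ℂ)
        = Matrix.single j j (1:ℂ) := by
      ext a b
      simp [Matrix.mul_apply, Matrix.single, Finset.sum_ite_eq, ite_and]
      split_ifs <;> rfl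
    rw [this, tr_std_mul]
  have tEB : Matrix.trace (Eᴴ * B) = B i j := by
    rw [hE, std_conjT, tr_std_mul]
  -- expand the traces
  have key1 : Matrix.trace ((Y0 + ζ • E)ᴴ * (Y0 + ζ • E) * A)
      = Matrix.trace (Y0ᴴ * Y0 * A) + (starRingEnd ℂ) ζ * S + ζ * (starRingEnd ℂ) S
        + (starRingEnd ℂ) ζ * ζ * A j j := by
    rw [Matrix.conjTranspose_add, Matrix.conjTranspose_smul]
    simp only [Matrix.add_mul, Matrix.mul_add, Matrix.smul_mul, Matrix.mul_smul,
      Matrix.trace_add, Matrix.trace_smul, smul_smul, Complex.star_def]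
    rw [tEY0A, tY0EA, tEEA]
    simp only [smul_eq_mul]
    ring
  have key2 : Matrix.trace ((Y0 + ζ • E)ᴴ * B)
      = Matrix.trace (Y0ᴴ * B) + (starRingEnd ℂ) ζ * B i j := by
    rw [Matrix.conjTranspose_add, Matrix.conjTranspose_smul, Matrix.add_mul,
      Matrix.trace_add, Matrix.smul_mul, Matrix.trace_smul, tEB, Complex.star_def,
      smul_eq_mul]
  rw [hY, hh, hh, key1, key2, hq]
  rw [Complex.sq_norm, Complex.normSq_apply]
  simp only [Complex.add_re, Complex.mul_re, Complex.sub_re, Complex.sub_im,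
    Complex.conj_re, Complex.conj_im, Complex.mul_im, map_sub]
  ring
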